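/- Let P_L be a set of literals over P, let s be a network state satisfying no literal of P_L, and let T be a strong stubborn set in s for P_L. Let σ = f₁, …, f_n with n ≥ 1 be a sequence over F applicable to s whose resulting state satisfies some literal of P_L, and whose cost is minimal among all such sequences. Let f_k be the action of σ with the smallest index that belongs to T (it exists by the landmark condition). Then f_k is applicable to s, f_k does not interfere with any of f₁, …, f_{k−1}, and the reordered sequence σ' = f_k, f₁, …, f_{k−1}, f_{k+1}, …, f_n is applicable to s, has the same cost as σ, and yields the same resulting state s[σ'] = s[σ]; in particular, there exists a minimal-cost sequence applicable to s whose result satisfies some literal of P_L and whose first action belongs to T and is applicable to s. -/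

import Mathlib

/-- A fix-action over network propositions `P`: precondition and postcondition
are finite sets of literals (a literal is a pair of a proposition and a
polarity, `true` for a positive and `false` for a negative occurrence),
containing at most one literal per proposition, together with a strictly
positive real cost. -/
structure FixAction (P : Type*) where
  pre : Finset (P × Bool)
  post : Finset (P × Bool)
  cost : ℝ
  cost_pos : 0 < cost
  pre_unique : ∀ (p : P) (b b' : Bool), (p, b) ∈ pre → (p, b') ∈ pre → b = b'
  post_unique : ∀ (p : P) (b b' : Bool), (p, b) ∈ post → (p, b') ∈ post → b = b'

variable {P : Type*} [DecidableEq P]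

/-- A network state `s` satisfies a literal `(p, true)` iff `p ∈ s`,
and satisfies `(p, false)` iff `p ∉ s`. -/
def satLit (s : Finset P) (l : P × Bool) : Prop :=
  (l.1 ∈ s) ↔ l.2 = true

/-- A fix-action is applicable to a state if the state satisfies every
literal of its precondition. -/
def FixAction.applicable (f : FixAction P) (s : Finset P) : Prop :=
  ∀ l ∈ f.pre, satLit s l

/-- The result `s[f]` of applying a fix-action: every proposition occurring
positively in `post f`, together with every proposition of `s` whose
negation does not occur in `post f`. -/
def FixAction.applyTo (f : FixAction P) (s : Finset P) : Finset P :=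
  (f.post.filter (fun l => l.2 = true)).image Prod.fst ∪
    s.filter (fun p => (p, false) ∉ f.post)

/-- Applicability of a finite sequence of fix-actions to a state. -/
def seqApplicable (s : Finset P) : List (FixAction P) → Prop
  | [] => True
  | f :: σ => f.applicable s ∧ seqApplicable (f.applyTo s) σ

/-- The result `s[σ]` of applying a sequence of fix-actions. -/
def seqApply (s : Finset P) : List (FixAction P) → Finset P
  | [] => s
  | f :: σ => seqApply (f.applyTo s) σ

/-- The cost of a sequence of fix-actions: the sum of the costs of its
elements. -/
noncomputable def seqCost (σ : List (FixAction P)) : ℝ :=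
  (σ.map FixAction.cost).sum

/-- `f₁` disables `f₂` if some literal in `post f₁` is the negation of a
literal in `pre f₂`. -/
def disablesFix (f₁ f₂ : FixAction P) : Prop :=
  ∃ (p : P) (b : Bool), (p, b) ∈ f₁.post ∧ (p, !b) ∈ f₂.pre

/-- `f₁` and `f₂` conflict if some literal in `post f₁` is the negation of a
literal in `post f₂`. -/
def conflictFix (f₁ f₂ : FixAction P) : Prop :=
  ∃ (p : P) (b : Bool), (p, b) ∈ f₁.post ∧ (p, !b) ∈ f₂.post

/-- `f₁` and `f₂` interfere if they conflict or either disables the other. -/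
def interfereFix (f₁ f₂ : FixAction P) : Prop :=
  conflictFix f₁ f₂ ∨ disablesFix f₁ f₂ ∨ disablesFix f₂ f₁

/-- A strong stubborn set `T ⊆ F` in state `s` for a set of literals `PL`:
(1) `T` satisfies the landmark condition for `PL` in `s`; (2) for every
`f ∈ T` applicable to `s`, all actions of `F` interfering with `f` belong to
`T`; (3) for every `f ∈ T` not applicable to `s`, some unsatisfied
precondition literal of `f` has all its achievers in `F` inside `T`. -/
def IsSSS (F : Finset (FixAction P)) (s : Finset P) (PL : Set (P × Bool))
    (T : Set (FixAction P)) : Prop :=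
  (∀ f ∈ T, f ∈ F) ∧
  (∀ σ : List (FixAction P), (∀ f ∈ σ, f ∈ F) → seqApplicable s σ →
    (∃ l ∈ PL, satLit (seqApply s σ) l) → ∃ f ∈ σ, f ∈ T) ∧
  (∀ f ∈ T, f.applicable s → ∀ f' ∈ F, interfereFix f' f → f' ∈ T) ∧
  (∀ f ∈ T, ¬ f.applicable s →
    ∃ l ∈ f.pre, ¬ satLit s l ∧ ∀ f' ∈ F, l ∈ f'.post → f' ∈ T)

section Aux
set_option linter.unusedSectionVars false

variable {P : Type*} [DecidableEq P]

lemma mem_applyTo {s : Finset P} {f : FixAction P} {p : P} :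
    p ∈ f.applyTo s ↔ (p, true) ∈ f.post ∨ (p ∈ s ∧ (p, false) ∉ f.post) := by
  unfold FixAction.applyTo
  simp only [Finset.mem_union, Finset.mem_image, Finset.mem_filter]
  constructor
  · rintro (⟨⟨a, b⟩, ⟨hm, hb⟩, rfl⟩ | ⟨hs, hn⟩)
    · left; exact hb ▸ hm
    · right; exact ⟨hs, hn⟩
  · rintro (h | ⟨hs, hn⟩)
    · exact Or.inl ⟨(p, true), ⟨h, rfl⟩, rfl⟩
    · exact Or.inr ⟨hs, hn⟩

lemma satLit_preserve {s : Finset P} {f : FixAction P} {l : P × Bool}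
    (h1 : satLit s l) (h2 : (l.1, !l.2) ∉ f.post) : satLit (f.applyTo s) l := by
  obtain ⟨p, b⟩ := l
  cases b with
  | true =>
    simp only [satLit, iff_true] at h1 ⊢
    rw [mem_applyTo]
    exact Or.inr ⟨h1, by simpa using h2⟩
  | false =>
    simp only [satLit, Bool.false_eq_true, iff_false] at h1 ⊢
    rw [mem_applyTo]
    rintro (h | ⟨hs, _⟩)
    · exact h2 (by simpa using h)
    · exact h1 hs

lemma achiever {s : Finset P} {f : FixAction P} {l : P × Bool}
    (h1 : ¬ satLit s l) (h2 : satLit (f.applyTo s) l) : l ∈ f.post := by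
  obtain ⟨p, b⟩ := l
  cases b with
  | true =>
    simp only [satLit, iff_true] at h1 h2
    rcases mem_applyTo.mp h2 with h | ⟨hs, _⟩
    · exact h
    · exact absurd hs h1
  | false =>
    simp only [satLit, Bool.false_eq_true, iff_false, not_not] at h1 h2
    by_contra hn
    exact h2 (mem_applyTo.mpr (Or.inr ⟨h1, hn⟩))

lemma seq_achiever : ∀ (σ : List (FixAction P)) (s : Finset P) {l : P × Bool},
    ¬ satLit s l → satLit (seqApply s σ) l → ∃ f ∈ σ, l ∈ f.post
  | [], s, l, h1, h2 => absurd h2 h1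
  | f :: σ, s, l, h1, h2 => by
    by_cases h : satLit (f.applyTo s) l
    · exact ⟨f, List.mem_cons_self, achiever h1 h⟩
    · obtain ⟨g, hg, hp⟩ := seq_achiever σ (f.applyTo s) h h2
      exact ⟨g, List.mem_cons_of_mem f hg, hp⟩

lemma applyTo_comm {f g : FixAction P} (h : ¬ conflictFix f g) (s : Finset P) :
    g.applyTo (f.applyTo s) = f.applyTo (g.applyTo s) := by
  ext p
  have h1 : ¬ ((p, true) ∈ f.post ∧ (p, false) ∈ g.post) := by
    rintro ⟨ha, hb⟩; exact h ⟨p, true, ha, by simpa using hb⟩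
  have h2 : ¬ ((p, false) ∈ f.post ∧ (p, true) ∈ g.post) := by
    rintro ⟨ha, hb⟩; exact h ⟨p, false, ha, by simpa using hb⟩
  simp only [mem_applyTo]
  tauto

lemma applicable_preserve {f g : FixAction P} {s : Finset P} (h : g.applicable s)
    (hd : ¬ disablesFix f g) : g.applicable (f.applyTo s) := by
  intro l hl
  refine satLit_preserve (h l hl) ?_
  intro hpost
  exact hd ⟨l.1, !l.2, hpost, by simpa using hl⟩

lemma interfere_symm {f g : FixAction P} (h : interfereFix f g) : interfereFix g f := by
  rcases h with ⟨p, b, h1, h2⟩ | h | h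
  · exact Or.inl ⟨p, !b, h2, by simpa using h1⟩
  · exact Or.inr (Or.inr h)
  · exact Or.inr (Or.inl h)

lemma seqApply_append (s : Finset P) : ∀ (L1 L2 : List (FixAction P)),
    seqApply s (L1 ++ L2) = seqApply (seqApply s L1) L2 := by
  intro L1
  induction L1 generalizing s with
  | nil => intro L2; rfl
  | cons f L ih => intro L2; exact ih (f.applyTo s) L2

lemma seqApplicable_append (s : Finset P) : ∀ (L1 L2 : List (FixAction P)),
    seqApplicable s (L1 ++ L2) ↔
      seqApplicable s L1 ∧ seqApplicable (seqApply s L1) L2 := by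
  intro L1
  induction L1 generalizing s with
  | nil => intro L2; simp [seqApplicable, seqApply]
  | cons f L ih =>
    intro L2
    constructor
    · rintro ⟨h1, h2⟩
      exact ⟨⟨h1, ((ih _ _).mp h2).1⟩, ((ih _ _).mp h2).2⟩
    · rintro ⟨⟨h1, h2⟩, h3⟩
      exact ⟨h1, (ih _ _).mpr ⟨h2, h3⟩⟩

lemma moveFront {f : FixAction P} : ∀ (A : List (FixAction P)) (s : Finset P),
    f.applicable s → seqApplicable s A → (∀ g ∈ A, ¬ interfereFix f g) →
    seqApplicable (f.applyTo s) A ∧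
      seqApply (f.applyTo s) A = f.applyTo (seqApply s A) := by
  intro A
  induction A with
  | nil => intro s _ _ _; exact ⟨trivial, rfl⟩
  | cons g L ih =>
    intro s hf hA hni
    obtain ⟨hg, hL⟩ := hA
    have hfg := hni g List.mem_cons_self
    have hnc : ¬ conflictFix f g := fun h => hfg (Or.inl h)
    have hnd1 : ¬ disablesFix f g := fun h => hfg (Or.inr (Or.inl h))
    have hnd2 : ¬ disablesFix g f := fun h => hfg (Or.inr (Or.inr h))
    have hf' : f.applicable (g.applyTo s) := applicable_preserve hf hnd2
    have hg' : g.applicable (f.applyTo s) := applicable_preserve hg hnd1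
    have hcomm := applyTo_comm hnc s
    obtain ⟨ih1, ih2⟩ := ih (g.applyTo s) hf' hL
      (fun g' hg'' => hni g' (List.mem_cons_of_mem g hg''))
    refine ⟨⟨hg', ?_⟩, ?_⟩
    · rw [hcomm]; exact ih1
    · show seqApply (g.applyTo (f.applyTo s)) L = f.applyTo (seqApply (g.applyTo s) L)
      rw [hcomm]; exact ih2

lemma seqCost_cons (f : FixAction P) (L : List (FixAction P)) :
    seqCost (f :: L) = f.cost + seqCost L := by simp [seqCost]

lemma seqCost_append (L1 L2 : List (FixAction P)) :
    seqCost (L1 ++ L2) = seqCost L1 + seqCost L2 := by simp [seqCost]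

end Aux

/-- The strong-stubborn-set reordering theorem: for a minimal-cost sequence
`σ` over `F` applicable to `s` whose result satisfies some literal of `PL`
(none being satisfied in `s`), the first action `f_k` of `σ` belonging to a
strong stubborn set `T` is applicable to `s`, does not interfere with any
earlier action, and moving it to the front gives an applicable sequence of
the same cost and the same resulting state; in particular some minimal-cost
achieving sequence starts with an action of `T` applicable to `s`. -/


theorem sss_reordering
    {P : Type*} [DecidableEq P]
    (F : Finset (FixAction P)) (PL : Set (P × Bool)) (s : Finset P)
    (hs : ∀ l ∈ PL, ¬ satLit s l)
    (T : Set (FixAction P)) (hT : IsSSS F s PL T)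
    (σ : List (FixAction P)) (hne : σ ≠ [])
    (hσF : ∀ f ∈ σ, f ∈ F) (happ : seqApplicable s σ)
    (hgoal : ∃ l ∈ PL, satLit (seqApply s σ) l)
    (hmin : ∀ τ : List (FixAction P), (∀ f ∈ τ, f ∈ F) → seqApplicable s τ →
      (∃ l ∈ PL, satLit (seqApply s τ) l) → seqCost σ ≤ seqCost τ)
    (k : Fin σ.length) (hk : σ.get k ∈ T)
    (hkmin : ∀ j : Fin σ.length, j < k → σ.get j ∉ T) :
    (σ.get k).applicable s ∧
    (∀ j : Fin σ.length, j < k → ¬ interfereFix (σ.get k) (σ.get j)) ∧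
    seqApplicable s (σ.get k :: σ.eraseIdx (k : ℕ)) ∧
    seqCost (σ.get k :: σ.eraseIdx (k : ℕ)) = seqCost σ ∧
    seqApply s (σ.get k :: σ.eraseIdx (k : ℕ)) = seqApply s σ ∧
    (∃ τ : List (FixAction P), ∃ f₀ : FixAction P, ∃ rest : List (FixAction P),
      τ = f₀ :: rest ∧ (∀ f ∈ τ, f ∈ F) ∧ seqApplicable s τ ∧
      (∃ l ∈ PL, satLit (seqApply s τ) l) ∧ seqCost τ = seqCost σ ∧
      f₀ ∈ T ∧ f₀.applicable s) := by
  
  classical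
  set f := σ.get k with hf
  set A := σ.take (k : ℕ) with hA
  set B := σ.drop ((k : ℕ) + 1) with hB
  have hklt : (k : ℕ) < σ.length := k.isLt
  have hσeq : σ = A ++ f :: B := by
    rw [hA, hB, hf]
    conv_lhs => rw [← List.take_append_drop (k : ℕ) σ]
    rw [List.drop_eq_getElem_cons hklt]
    simp [List.get_eq_getElem]
  have hget : ∀ j : Fin σ.length, σ.get j ∈ σ := fun j => by
    rw [List.get_eq_getElem]; exact List.getElem_mem j.isLt
  have hmemA : ∀ g ∈ A, ∃ j : Fin σ.length, j < k ∧ σ.get j = g := by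
    intro g hg
    rw [hA] at hg
    obtain ⟨i, hi, hgi⟩ := List.mem_iff_getElem.mp hg
    have hik : i < (k : ℕ) := by
      have := hi; simp only [List.length_take] at this; omega
    have his : i < σ.length := lt_trans hik hklt
    refine ⟨⟨i, his⟩, hik, ?_⟩
    rw [← hgi]
    simp [List.get_eq_getElem, List.getElem_take]
  -- decompose applicability of σ
  have happ' := happ
  rw [hσeq, seqApplicable_append] at happ'
  obtain ⟨happA, hfA, happB⟩ := happ'
  -- (a) f is applicable to s
  have hfapp : f.applicable s := by
    by_contra hna
    obtain ⟨l, hlpre, hlns, hach⟩ := hT.2.2.2 f hk hna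
    have hsat : satLit (seqApply s A) l := hfA l hlpre
    obtain ⟨g, hgA, hgpost⟩ := seq_achiever A s hlns hsat
    obtain ⟨j, hjk, rfl⟩ := hmemA g hgA
    have hgF : σ.get j ∈ F := hσF _ (hget j)
    exact hkmin j hjk (hach _ hgF hgpost)
  -- (b) no interference with earlier actions
  have hnoint : ∀ j : Fin σ.length, j < k → ¬ interfereFix f (σ.get j) := by
    intro j hjk hint
    have hjF : σ.get j ∈ F := hσF _ (hget j)
    exact hkmin j hjk (hT.2.2.1 f hk hfapp _ hjF (interfere_symm hint))
  have hniA : ∀ g ∈ A, ¬ interfereFix f g := by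
    intro g hg
    obtain ⟨j, hjk, rfl⟩ := hmemA g hg
    exact hnoint j hjk
  -- commutation
  obtain ⟨hmf1, hmf2⟩ := moveFront A s hfapp happA hniA
  have herase : σ.eraseIdx (k : ℕ) = A ++ B := by
    rw [hA, hB]; exact List.eraseIdx_eq_take_drop_succ σ (k : ℕ)
  -- (c) applicability of reordered sequence
  have hcapp : seqApplicable s (f :: σ.eraseIdx (k : ℕ)) := by
    rw [herase]
    refine ⟨hfapp, ?_⟩
    rw [seqApplicable_append]
    exact ⟨hmf1, by rw [hmf2]; exact happB⟩
  -- (d) same resulting state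
  have hsame : seqApply s (f :: σ.eraseIdx (k : ℕ)) = seqApply s σ := by
    rw [herase]
    show seqApply (f.applyTo s) (A ++ B) = seqApply s σ
    rw [seqApply_append, hmf2]
    conv_rhs => rw [hσeq]
    rw [seqApply_append]
    rfl
  -- (e) same cost
  have hcost : seqCost (f :: σ.eraseIdx (k : ℕ)) = seqCost σ := by
    rw [herase]
    conv_rhs => rw [hσeq]
    rw [seqCost_cons, seqCost_append, seqCost_append, seqCost_cons]
    ring
  refine ⟨hfapp, hnoint, hcapp, hcost, hsame, ?_⟩
  refine ⟨f :: σ.eraseIdx (k : ℕ), f, σ.eraseIdx (k : ℕ), rfl, ?_, hcapp, ?_, hcost, hk, hfapp⟩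
  · intro g hg
    rcases List.mem_cons.mp hg with rfl | hg
    · exact hσF _ (hget k)
    · exact hσF _ ((List.eraseIdx_sublist σ (k : ℕ)).subset hg)
  · rw [hsame]; exact hgoal
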